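/- There is an absolute constant C > 0 such that the following holds: let k ≥ 1, let a_1, ..., a_k be real numbers with |a_i| > 1 for all i, let ε_1, ..., ε_k be i.i.d. random variables taking the values +1 and −1 each with probability 1/2, and let I ⊆ ℝ be an interval of length at most one. Then the probability that Σ_{i=1}^k a_i ε_i lies in I is at most C/√k. -/

import Mathlib

private lemma cb_sq_bound : ∀ n : ℕ, Nat.centralBinom n ^ 2 * (2 * n + 1) ≤ 16 ^ n := by
  intro n
  induction n with
  | zero => simp [Nat.centralBinom]
  | succ n ih =>
    have key := Nat.succ_mul_centralBinom_succ n
    have hpos : 0 < (n + 1) ^ 2 := by positivity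
    have hratio : 4 * (2 * n + 1) * (2 * n + 3) ≤ 16 * (n + 1) ^ 2 := by nlinarith
    have : (n + 1) ^ 2 * (Nat.centralBinom (n + 1) ^ 2 * (2 * (n + 1) + 1)) ≤
        (n + 1) ^ 2 * 16 ^ (n + 1) := by
      calc (n + 1) ^ 2 * (Nat.centralBinom (n + 1) ^ 2 * (2 * (n + 1) + 1))
          = ((n + 1) * Nat.centralBinom (n + 1)) ^ 2 * (2 * (n + 1) + 1) := by ring
        _ = (2 * (2 * n + 1) * Nat.centralBinom n) ^ 2 * (2 * (n + 1) + 1) := by rw [key]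
        _ = (4 * (2 * n + 1) * (2 * n + 3)) * (Nat.centralBinom n ^ 2 * (2 * n + 1)) := by
            ring
        _ ≤ (4 * (2 * n + 1) * (2 * n + 3)) * 16 ^ n := Nat.mul_le_mul_left _ ih
        _ ≤ (16 * (n + 1) ^ 2) * 16 ^ n := Nat.mul_le_mul_right _ hratio
        _ = (n + 1) ^ 2 * 16 ^ (n + 1) := by ring
    exact Nat.le_of_mul_le_mul_left this hpos

private lemma choose_half_sq_bound (k : ℕ) : (k.choose (k / 2)) ^ 2 * (k + 1) ≤ 4 ^ k := by
  rcases Nat.even_or_odd k with ⟨n, hn⟩ | ⟨n, hn⟩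
  · subst hn
    have h : (n + n) / 2 = n := by omega
    rw [h]
    have := cb_sq_bound n
    have h16 : (4 : ℕ) ^ (n + n) = 16 ^ n := by
      rw [show n + n = 2 * n by ring, pow_mul]; norm_num
    rw [h16]
    simpa [Nat.centralBinom, show 2 * n = n + n by ring, show 2 * n + 1 = n + n + 1 by ring]
      using this
  · subst hn
    have h : (2 * n + 1) / 2 = n := by omega
    rw [h]
    have hdouble : 2 * (2 * n + 1).choose n = Nat.centralBinom (n + 1) := by
      rw [Nat.centralBinom, show 2 * (n + 1) = (2 * n + 1) + 1 by ring,
        Nat.choose_succ_succ, Nat.choose_symm_half]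
      ring
    have hcb := cb_sq_bound (n + 1)
    have h16 : (4 : ℕ) ^ (2 * n + 1) = 4 * 16 ^ n := by
      rw [pow_succ', pow_mul]; norm_num
    rw [h16]
    have hsq : 4 * ((2 * n + 1).choose n) ^ 2 = Nat.centralBinom (n + 1) ^ 2 := by
      rw [← hdouble]; ring
    have h4 : 4 * (((2 * n + 1).choose n) ^ 2 * (2 * n + 1 + 1)) ≤ 4 * (4 * 16 ^ n) := by
      calc 4 * (((2 * n + 1).choose n) ^ 2 * (2 * n + 1 + 1))
          = (4 * ((2 * n + 1).choose n) ^ 2) * (2 * n + 2) := by ring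
        _ = Nat.centralBinom (n + 1) ^ 2 * (2 * n + 2) := by rw [hsq]
        _ ≤ Nat.centralBinom (n + 1) ^ 2 * (2 * (n + 1) + 1) := Nat.mul_le_mul_left _ (by omega)
        _ ≤ 16 ^ (n + 1) := hcb
        _ = 4 * (4 * 16 ^ n) := by ring
    exact Nat.le_of_mul_le_mul_left h4 (by norm_num)

/-- The Erdős form of the Littlewood–Offord lemma: if `|a_i| > 1` for all `i` and
`ε_1, …, ε_k` are i.i.d. uniform `±1` signs, then for any interval `I` of length at most one,
`P(Σ a_i ε_i ∈ I) = O(1/√k)`. -/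
theorem littlewood_offord_erdos :
    ∃ C > (0 : ℝ), ∀ k : ℕ, 1 ≤ k → ∀ a : Fin k → ℝ, (∀ i, 1 < |a i|) →
      ∀ x y : ℝ, y - x ≤ 1 →
        (Nat.card {b : Fin k → Bool //
            (∑ i, (if b i then (1 : ℝ) else -1) * a i) ∈ Set.Icc x y} : ℝ) / 2 ^ k ≤
          C / Real.sqrt k := by
  classical
  refine ⟨1, one_pos, fun k hk a ha x y hxy => ?_⟩
  set f : Finset (Fin k) → ℝ := fun S => ∑ i, (if i ∈ S then (1 : ℝ) else -1) * |a i| with hf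
  set T : Finset (Finset (Fin k)) :=
    Finset.univ.filter (fun S => f S ∈ Set.Icc x y) with hT
  -- step 1: the counting set injects into T
  set P : (Fin k → Bool) → Prop :=
    fun b => (∑ i, (if b i then (1 : ℝ) else -1) * a i) ∈ Set.Icc x y with hP
  have hcard : Nat.card {b : Fin k → Bool // P b} = (Finset.univ.filter P).card := by
    rw [Nat.card_eq_fintype_card, Fintype.card_subtype]
  set σ : (Fin k → Bool) → Finset (Fin k) :=
    fun b => Finset.univ.filter (fun i => (if 0 ≤ a i then b i else !b i) = true) with hσ
  have hsum : ∀ b : Fin k → Bool,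
      (∑ i, (if b i then (1 : ℝ) else -1) * a i) = f (σ b) := by
    intro b
    refine Finset.sum_congr rfl fun i _ => ?_
    by_cases h : 0 ≤ a i
    · have habs : |a i| = a i := abs_of_nonneg h
      cases hb : b i <;> simp [hσ, h, hb, habs]
    · have habs : |a i| = -a i := abs_of_neg (not_le.1 h)
      cases hb : b i <;> simp [hσ, h, hb, habs] <;> ring
  have hinj : Function.Injective σ := by
    intro b b' hbb
    funext i
    have h1 : i ∈ σ b ↔ i ∈ σ b' := by rw [hbb]
    simp only [hσ, Finset.mem_filter, Finset.mem_univ, true_and] at h1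
    by_cases h : 0 ≤ a i <;>
      simp only [h, if_true, if_false] at h1 <;>
      cases hb : b i <;> cases hb' : b' i <;> simp [hb, hb'] at h1 ⊢
  have hle1 : (Finset.univ.filter P).card ≤ T.card := by
    apply Finset.card_le_card_of_injOn σ
    · intro b hb
      have hb' : P b := (Finset.mem_filter.1 hb).2
      rw [hT, Finset.mem_coe, Finset.mem_filter]
      exact ⟨Finset.mem_univ _, by rw [← hsum b]; exact hb'⟩
    · exact fun b _ b' _ h => hinj h
  -- step 2: T is an antichain
  have hanti : IsAntichain (· ⊆ ·) (↑T : Set (Finset (Fin k))) := by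
    intro S hS S' hS' hne hsub
    simp only [hT, Finset.coe_filter, Set.mem_setOf_eq, Finset.mem_univ, true_and] at hS hS'
    have hssub : S ⊆ S' := hsub
    have hne' : ¬ S' ⊆ S := fun h => hne (Finset.Subset.antisymm hssub h)
    obtain ⟨j, hj⟩ := Finset.sdiff_nonempty.2 hne'
    have hdiff : f S' - f S = ∑ i ∈ S' \ S, 2 * |a i| := by
      rw [hf, ← Finset.sum_sub_distrib]
      rw [show (∑ i ∈ S' \ S, 2 * |a i|) =
          ∑ i : Fin k, (if i ∈ S' \ S then 2 * |a i| else 0) by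
        rw [Finset.sum_ite_mem, Finset.univ_inter]]
      refine Finset.sum_congr rfl fun i _ => ?_
      by_cases h1 : i ∈ S
      · have h2 : i ∈ S' := hssub h1
        simp [h1, h2, Finset.mem_sdiff]
      · by_cases h2 : i ∈ S' <;> simp [h1, h2, Finset.mem_sdiff] <;> ring
    have hbig : 2 * |a j| ≤ ∑ i ∈ S' \ S, 2 * |a i| :=
      Finset.single_le_sum (f := fun i => 2 * |a i|)
        (fun i _ => by positivity) hj
    have h2 : (2 : ℝ) < 2 * |a j| := by have := ha j; linarith
    have hle : f S' - f S ≤ 1 := by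
      have := hS.1; have := hS.2; have := hS'.1; have := hS'.2; linarith
    linarith [hdiff ▸ (lt_of_lt_of_le h2 hbig)]
  have hle2 : T.card ≤ k.choose (k / 2) := by
    have := IsAntichain.sperner hanti
    simpa using this
  -- step 3: the binomial bound
  have hchoose : (k.choose (k / 2) : ℝ) * Real.sqrt k ≤ 2 ^ k := by
    have hb := choose_half_sq_bound k
    have hbr : ((k.choose (k / 2) : ℝ)) ^ 2 * k ≤ (2 ^ k) ^ 2 := by
      have : ((k.choose (k / 2) : ℝ)) ^ 2 * (k + 1) ≤ (4 : ℝ) ^ k := by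
        exact_mod_cast hb
      have h4 : (4 : ℝ) ^ k = (2 ^ k) ^ 2 := by
        rw [← pow_mul, mul_comm, pow_mul]; norm_num
      nlinarith [sq_nonneg ((k.choose (k / 2) : ℝ))]
    have h1 : (k.choose (k / 2) : ℝ) * Real.sqrt k =
        Real.sqrt (((k.choose (k / 2) : ℝ)) ^ 2 * k) := by
      rw [Real.sqrt_mul (by positivity), Real.sqrt_sq (by positivity)]
    rw [h1]
    calc Real.sqrt (((k.choose (k / 2) : ℝ)) ^ 2 * k) ≤ Real.sqrt ((2 ^ k) ^ 2) :=
          Real.sqrt_le_sqrt hbr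
      _ = 2 ^ k := Real.sqrt_sq (by positivity)
  -- combine
  have hsk : (0 : ℝ) < Real.sqrt k := Real.sqrt_pos.2 (by exact_mod_cast hk)
  have h2k : (0 : ℝ) < 2 ^ k := by positivity
  rw [div_le_div_iff₀ h2k hsk, one_mul]
  calc (Nat.card {b : Fin k → Bool // P b} : ℝ) * Real.sqrt k
      ≤ (k.choose (k / 2) : ℝ) * Real.sqrt k := by
        apply mul_le_mul_of_nonneg_right _ hsk.le
        exact_mod_cast hcard ▸ (Nat.cast_le.2 (hle1.trans hle2))
    _ ≤ 2 ^ k := hchoose
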